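/- Let q be a prime power, t ≥ 2, ν with gcd(ν, t) = 1, and σ: x ↦ x^{q^ν}. For α ∈ F_{q^t} with N(α) = 1 define φ(λ) = α λ^{q^ν}. Then the set L = {⟨(λ, φ(λ))⟩_{F_{q^t}} : λ ∈ F_{q^t}^*} ⊆ PG(1, q^t) is a scattered linear set of pseudoregulus type: it has exactly (q^t − 1)/(q − 1) points, and it is the image of {⟨(λ, λ^q)⟩ : λ ∈ F_{q^t}^*} under an element of PGL(2, q^t). -/

import Mathlib

open Finset Subgroup

private lemma geom_aux (q : ℕ) (hq : 1 ≤ q) (t : ℕ) :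
    (q - 1) * (∑ i ∈ Finset.range t, q ^ i) = q ^ t - 1 := by
  induction t with
  | zero => simp
  | succ t ih =>
    rw [Finset.sum_range_succ, Nat.mul_add, ih, Nat.sub_mul, one_mul, pow_succ']
    have h1 : 1 ≤ q ^ t := Nat.one_le_pow _ _ hq
    have h3 : q ^ t ≤ q * q ^ t := Nat.le_mul_of_pos_left _ hq
    generalize hb : q * q ^ t = b at *
    omega

private lemma gcd_pow_sub_one (q a b : ℕ) (hq : 2 ≤ q) (hb : 1 ≤ b)
    (hcop : Nat.gcd a b = 1) : Nat.gcd (q ^ a - 1) (q ^ b - 1) = q - 1 := by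
  set d := Nat.gcd (q ^ a - 1) (q ^ b - 1) with hd
  have hqb : 2 ≤ q ^ b := le_trans hq (Nat.le_self_pow (by omega) q)
  have hdpos : 0 < d := Nat.gcd_pos_of_pos_right _ (by omega)
  haveI : NeZero d := ⟨hdpos.ne'⟩
  have hdvd1 : q - 1 ∣ d := Nat.dvd_gcd
    (by simpa using Nat.sub_dvd_pow_sub_pow q 1 a)
    (by simpa using Nat.sub_dvd_pow_sub_pow q 1 b)
  have key : ∀ m : ℕ, d ∣ q ^ m - 1 → (q : ZMod d) ^ m = 1 := by
    intro m hm
    have h1m : 1 ≤ q ^ m := Nat.one_le_pow _ _ (by omega)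
    have hz : ((q ^ m - 1 : ℕ) : ZMod d) = 0 := (ZMod.natCast_eq_zero_iff _ _).2 hm
    rw [Nat.cast_sub h1m] at hz
    push_cast at hz
    have := sub_eq_zero.mp hz
    simpa using this
  have ha' : (q : ZMod d) ^ a = 1 := key a (Nat.gcd_dvd_left _ _)
  have hb' : (q : ZMod d) ^ b = 1 := key b (Nat.gcd_dvd_right _ _)
  have hord : orderOf (q : ZMod d) ∣ 1 := by
    rw [← hcop]
    exact Nat.dvd_gcd (orderOf_dvd_of_pow_eq_one ha') (orderOf_dvd_of_pow_eq_one hb')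
  have hq1 : (q : ZMod d) = 1 := orderOf_eq_one_iff.mp (Nat.dvd_one.mp hord)
  have hdvd2 : d ∣ q - 1 := by
    have hz : ((q - 1 : ℕ) : ZMod d) = 0 := by
      rw [Nat.cast_sub (by omega)]
      push_cast
      rw [hq1, sub_self]
    exact (ZMod.natCast_eq_zero_iff _ _).1 hz
  exact Nat.dvd_antisymm hdvd2 hdvd1

private lemma exists_pow_eq {G : Type*} [Group G] [Fintype G] [IsCyclic G]
    (e n : ℕ) (hcard : Fintype.card G = Nat.gcd e (Fintype.card G) * n)
    (x : G) (hx : x ^ n = 1) : ∃ y : G, y ^ e = x := by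
  obtain ⟨g, hg⟩ := IsCyclic.exists_generator (α := G)
  have hog : orderOf g = Fintype.card G := (orderOf_eq_card_of_forall_mem_zpowers hg).trans Nat.card_eq_fintype_card
  obtain ⟨k, hk⟩ := (Submonoid.mem_powers_iff x g).1 (mem_powers_iff_mem_zpowers.2 (hg x))
  set N := Fintype.card G with hN
  set d := Nat.gcd e N with hdd
  have hn0 : 0 < n := by
    rcases Nat.eq_zero_or_pos n with h | h
    · rw [h, mul_zero] at hcard; exact absurd hcard Fintype.card_pos.ne'
    · exact h
  have hNk : N ∣ k * n := by
    rw [← hog]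
    exact orderOf_dvd_of_pow_eq_one (by rw [pow_mul, hk, hx])
  have hdk : d ∣ k := by
    have h2 : d * n ∣ k * n := hcard ▸ hNk
    exact (Nat.mul_dvd_mul_iff_right hn0).1 h2
  obtain ⟨c, hc⟩ := hdk
  set A := Nat.gcdA e N with hA
  set B := Nat.gcdB e N with hB
  have hbez : (d : ℤ) = e * A + N * B := Nat.gcd_eq_gcd_ab e N
  refine ⟨g ^ (A * c), ?_⟩
  have hkc : (k : ℤ) = (d : ℤ) * c := by exact_mod_cast hc
  have h2 : (A * (c : ℤ)) * e = k + N * (-(B * c)) := by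
    linear_combination (-(c : ℤ)) * hbez - hkc
  calc (g ^ (A * (c : ℤ))) ^ (e : ℕ) = g ^ ((A * (c : ℤ)) * e) := by
        rw [← zpow_natCast (g ^ (A * (c : ℤ))) e, ← zpow_mul]
    _ = g ^ (k : ℤ) * (g ^ (N : ℤ)) ^ (-(B * (c : ℤ))) := by rw [h2, zpow_add, zpow_mul]
    _ = x := by rw [zpow_natCast, zpow_natCast, hk, pow_card_eq_one, one_zpow, mul_one]

private lemma key_iff {K : Type*} [Field K] [Fintype K] [DecidableEq K] (q n e : ℕ)
    (hq : 2 ≤ q) (hn0 : 0 < n)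
    (hNn : Fintype.card Kˣ = (q - 1) * n)
    (hgcd : Nat.gcd (e - 1) (Fintype.card Kˣ) = q - 1)
    (β : K) (hβ : β ^ n = 1) (he : 1 ≤ e) (μ : K) :
    μ ^ n = 1 ↔ ∃ lam : K, lam ≠ 0 ∧ β * lam ^ e = μ * lam := by
  have hβ0 : β ≠ 0 := by
    rintro rfl; rw [zero_pow hn0.ne'] at hβ; exact zero_ne_one hβ
  have hqd : q - 1 ∣ e - 1 := hgcd ▸ Nat.gcd_dvd_left _ _
  have hlampow : ∀ lam : K, lam ≠ 0 → lam ^ ((e - 1) * n) = 1 := by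
    intro lam hl
    obtain ⟨c, hc⟩ := hqd
    have hNcard : lam ^ Fintype.card Kˣ = 1 := by
      rw [Fintype.card_units]; exact FiniteField.pow_card_sub_one_eq_one lam hl
    calc lam ^ ((e - 1) * n) = (lam ^ Fintype.card Kˣ) ^ c := by
          rw [← pow_mul, hNn, hc]; ring_nf
      _ = 1 := by rw [hNcard, one_pow]
  constructor
  · intro hμ
    have hμ0 : μ ≠ 0 := by
      rintro rfl; rw [zero_pow hn0.ne'] at hμ; exact zero_ne_one hμ
    set x := μ * β⁻¹ with hxdef
    have hx0 : x ≠ 0 := mul_ne_zero hμ0 (inv_ne_zero hβ0)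
    have hxn : x ^ n = 1 := by
      rw [hxdef, mul_pow, inv_pow, hμ, hβ, inv_one, one_mul]
    have hxu : (Units.mk0 x hx0) ^ n = 1 := by
      ext; rw [Units.val_pow_eq_pow_val, Units.val_mk0, hxn, Units.val_one]
    obtain ⟨y, hy⟩ := exists_pow_eq (e - 1) n (by rw [hgcd]; exact hNn) (Units.mk0 x hx0) hxu
    refine ⟨(y : K), y.ne_zero, ?_⟩
    have hyK : (y : K) ^ (e - 1) = x := by
      rw [← Units.val_pow_eq_pow_val, hy, Units.val_mk0]
    have hsplit : β * (y : K) ^ e = β * ((y : K) ^ (e - 1) * (y : K)) := by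
      rw [← pow_succ]
      congr 2
      omega
    rw [hsplit, hyK, hxdef]
    field_simp
  · rintro ⟨lam, hl, heq⟩
    have hμeq : μ = β * lam ^ (e - 1) := by
      apply mul_right_cancel₀ hl
      rw [← heq, mul_assoc, ← pow_succ]
      congr 2
      omega
    rw [hμeq, mul_pow, hβ, one_mul, ← pow_mul, hlampow lam hl]

private lemma span_pair_eq {K : Type*} [Field K] (lam b μ : K) (hl : lam ≠ 0) (h : b = lam * μ) :
    Submodule.span K {((lam, b) : K × K)} = Submodule.span K {((1 : K), μ)} := by
  have hv : ((lam, b) : K × K) = lam • ((1 : K), μ) := by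
    rw [Prod.smul_mk, smul_eq_mul, smul_eq_mul, mul_one, h]
  rw [hv]
  exact Submodule.span_singleton_smul_eq (isUnit_iff_ne_zero.2 hl) _

private lemma span_vec_eq {K : Type*} [Field K] (lam b μ : K) (hl : lam ≠ 0) (h : b = lam * μ) :
    Submodule.span K {![lam, b]} = Submodule.span K {![(1 : K), μ]} := by
  have hv : ![lam, b] = lam • ![(1 : K), μ] := by
    funext i
    fin_cases i <;> simp [h]
  rw [hv]
  exact Submodule.span_singleton_smul_eq (isUnit_iff_ne_zero.2 hl) _

private lemma inj_pair {K : Type*} [Field K] :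
    Function.Injective (fun μ : K => Submodule.span K {((1 : K), μ)}) := by
  intro μ μ' h
  simp only at h
  have hmem : ((1 : K), μ') ∈ Submodule.span K {((1 : K), μ)} := by
    rw [h]; exact Submodule.mem_span_singleton_self _
  obtain ⟨a, ha⟩ := Submodule.mem_span_singleton.1 hmem
  rw [Prod.smul_mk, smul_eq_mul, smul_eq_mul, mul_one, Prod.ext_iff] at ha
  obtain ⟨h1, h2⟩ := ha
  simp only at h1 h2
  rw [← h2, h1, one_mul]

private lemma count_pow_eq_one {K : Type*} [Field K] [Fintype K] [DecidableEq K] (q n : ℕ) (hq : 2 ≤ q)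
    (hn0 : 0 < n) (hNn : Fintype.card Kˣ = (q - 1) * n) :
    Set.ncard {μ : K | μ ^ n = 1} = n := by
  have h1 : {μ : K | μ ^ n = 1} = Units.val '' {u : Kˣ | u ^ n = 1} := by
    ext μ
    constructor
    · intro hμ
      have hμ0 : μ ≠ 0 := by
        rintro rfl; rw [Set.mem_setOf_eq, zero_pow hn0.ne'] at hμ; exact zero_ne_one hμ
      refine ⟨Units.mk0 μ hμ0, ?_, rfl⟩
      show (Units.mk0 μ hμ0) ^ n = 1
      ext; rw [Units.val_pow_eq_pow_val, Units.val_mk0, hμ, Units.val_one]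
    · rintro ⟨u, hu, rfl⟩
      show (u : K) ^ n = 1
      rw [← Units.val_pow_eq_pow_val, hu, Units.val_one]
  obtain ⟨g, hg⟩ := IsCyclic.exists_generator (α := Kˣ)
  have hog : orderOf g = Fintype.card Kˣ :=
    (orderOf_eq_card_of_forall_mem_zpowers hg).trans Nat.card_eq_fintype_card
  have hq1 : 0 < q - 1 := by omega
  set h := g ^ (q - 1) with hh
  have hhn : h ^ n = 1 := by rw [hh, ← pow_mul, ← hNn, pow_card_eq_one]
  have h2 : {u : Kˣ | u ^ n = 1} = (Subgroup.zpowers h : Set Kˣ) := by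
    ext x
    simp only [Set.mem_setOf_eq, SetLike.mem_coe]
    constructor
    · intro hx
      obtain ⟨k, hk⟩ := (Submonoid.mem_powers_iff x g).1 (mem_powers_iff_mem_zpowers.2 (hg x))
      have hdvd : (q - 1) ∣ k := by
        have hNdvd : Fintype.card Kˣ ∣ k * n := by
          rw [← hog]
          exact orderOf_dvd_of_pow_eq_one (by rw [pow_mul, hk, hx])
        rw [hNn] at hNdvd
        exact (Nat.mul_dvd_mul_iff_right hn0).1 hNdvd
      obtain ⟨c, hc⟩ := hdvd
      rw [← hk, hc]
      exact Subgroup.mem_zpowers_iff.2 ⟨(c : ℤ), by rw [zpow_natCast, hh, ← pow_mul]⟩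
    · intro hx
      obtain ⟨m, hm⟩ := (Submonoid.mem_powers_iff x h).1 (mem_powers_iff_mem_zpowers.2 hx)
      rw [← hm, ← pow_mul, mul_comm, pow_mul, hhn, one_pow]
  have h3 : orderOf h = n := by
    rw [hh, orderOf_pow, hog, hNn, Nat.gcd_eq_right ⟨n, by ring⟩, Nat.mul_div_cancel_left _ hq1]
  rw [h1, Set.ncard_image_of_injective _ Units.val_injective, h2]
  calc Set.ncard (Subgroup.zpowers h : Set Kˣ) = Nat.card (Subgroup.zpowers h) :=
        (Nat.card_coe_set_eq _).symm
    _ = orderOf h := Nat.card_zpowers h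
    _ = n := h3

theorem stmt19 (q t ν : ℕ) (hq : IsPrimePow q) (ht : 2 ≤ t) (hcop : Nat.gcd ν t = 1)
    (F K : Type*) [Field F] [Field K] [Algebra F K] [Fintype F] [Fintype K]
    (hF : Fintype.card F = q) (hK : Fintype.card K = q ^ t)
    (α : K) (hα : Algebra.norm F α = 1) :
    Set.ncard {P : Submodule K (K × K) | ∃ lam : K, lam ≠ 0 ∧
        P = Submodule.span K {(lam, α * lam ^ q ^ ν)}} = (q ^ t - 1) / (q - 1) ∧
    ∃ M : Matrix (Fin 2) (Fin 2) K, IsUnit M.det ∧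
      {P : Submodule K (Fin 2 → K) | ∃ lam : K, lam ≠ 0 ∧
          P = Submodule.span K {M.mulVec ![lam, lam ^ q]}} =
        {P : Submodule K (Fin 2 → K) | ∃ lam : K, lam ≠ 0 ∧
          P = Submodule.span K {![lam, α * lam ^ q ^ ν]}} := by
  classical
  have hq2 : 2 ≤ q := hq.two_le
  have ht1 : 1 ≤ t := by omega
  set n := ∑ i ∈ Finset.range t, q ^ i with hn
  have hgeom : (q - 1) * n = q ^ t - 1 := geom_aux q (by omega) t
  have hqt : 2 ≤ q ^ t := le_trans hq2 (Nat.le_self_pow (by omega) q)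
  have hn0 : 0 < n := by
    rcases Nat.eq_zero_or_pos n with h | h
    · rw [h, mul_zero] at hgeom; omega
    · exact h
  have hdiv : (q ^ t - 1) / (q - 1) = n := by
    rw [← hgeom, Nat.mul_div_cancel_left _ (by omega : 0 < q - 1)]
  have hNu : Fintype.card Kˣ = q ^ t - 1 := by rw [Fintype.card_units, hK]
  have hNn : Fintype.card Kˣ = (q - 1) * n := by rw [hNu, hgeom]
  have hgcdν : Nat.gcd (q ^ ν - 1) (Fintype.card Kˣ) = q - 1 := by
    rw [hNu]; exact gcd_pow_sub_one q ν t hq2 ht1 hcop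
  have hgcd1 : Nat.gcd (q - 1) (Fintype.card Kˣ) = q - 1 :=
    Nat.gcd_eq_left ⟨n, hNn⟩
  -- char p setup
  obtain ⟨p, k, hpp, hk0, hpk⟩ := hq
  have hpprime : p.Prime := Nat.prime_iff.2 hpp
  obtain ⟨c, hcK⟩ := CharP.exists K
  haveI := hcK
  obtain ⟨m, hcprime, hcard⟩ := FiniteField.card K c
  have hpc : p = c := by
    have h1 : q ^ t = c ^ (m : ℕ) := by rw [← hK, hcard]
    have h2 : p ∣ c ^ (m : ℕ) := by
      rw [← h1, ← hpk, ← pow_mul]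
      exact dvd_pow_self p (by positivity)
    exact (Nat.prime_dvd_prime_iff_eq hpprime hcprime).1 (hpprime.dvd_of_dvd_pow h2)
  subst hpc
  haveI : Fact p.Prime := ⟨hpprime⟩
  -- the Frobenius algebra automorphism
  have hcomm : ∀ a : F, (iterateFrobenius K p k) (algebraMap F K a) = algebraMap F K a := by
    intro a
    rw [iterateFrobenius_def, ← map_pow, hpk, ← hF, FiniteField.pow_card]
  let φh : K →ₐ[F] K := { iterateFrobenius K p k with commutes' := hcomm }
  have hφh : ∀ x : K, φh x = x ^ q := by
    intro x
    show iterateFrobenius K p k x = x ^ q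
    rw [iterateFrobenius_def, hpk]
  have hbij : Function.Bijective φh :=
    Finite.injective_iff_bijective.1 (RingHom.injective φh.toRingHom)
  let φ : K ≃ₐ[F] K := AlgEquiv.ofBijective φh hbij
  have hφ : ∀ x : K, φ x = x ^ q := hφh
  have hφpow : ∀ (i : ℕ) (x : K), (φ ^ i) x = x ^ q ^ i := by
    intro i
    induction i with
    | zero => intro x; simp
    | succ i ih =>
      intro x
      rw [pow_succ, AlgEquiv.mul_apply, ih, hφ, ← pow_mul, ← pow_succ']
  have hfr : Module.finrank F K = t := by
    have h1 : Fintype.card K = Fintype.card F ^ Module.finrank F K := Module.card_eq_pow_finrank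
    rw [hK, hF] at h1
    exact Nat.pow_right_injective hq2 h1.symm
  have hcardaut : Fintype.card (K ≃ₐ[F] K) = t := by
    rw [← Nat.card_eq_fintype_card, IsGalois.card_aut_eq_finrank, hfr]
  obtain ⟨g₀, hg₀⟩ := IsCyclic.exists_generator (α := Kˣ)
  have hog₀ : orderOf g₀ = q ^ t - 1 := by
    rw [(orderOf_eq_card_of_forall_mem_zpowers hg₀).trans Nat.card_eq_fintype_card, hNu]
  have hinj : Function.Injective (fun i : Fin t => φ ^ (i : ℕ)) := by
    intro i j hij
    simp only at hij
    have hx : (g₀ : K) ^ q ^ (i : ℕ) = (g₀ : K) ^ q ^ (j : ℕ) := by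
      have h0 := DFunLike.congr_fun hij (g₀ : K)
      rwa [hφpow, hφpow] at h0
    have hxu : g₀ ^ q ^ (i : ℕ) = g₀ ^ q ^ (j : ℕ) := by
      ext; rw [Units.val_pow_eq_pow_val, Units.val_pow_eq_pow_val]; exact hx
    have hmod := pow_eq_pow_iff_modEq.1 hxu
    rw [hog₀] at hmod
    have hlt : ∀ i : Fin t, q ^ (i : ℕ) < q ^ t - 1 := by
      intro i
      have h1 : q ^ (i : ℕ) ≤ q ^ (t - 1) := Nat.pow_le_pow_right (by omega) (by omega)
      have h2 : q ^ (t - 1) * 2 ≤ q ^ (t - 1) * q := Nat.mul_le_mul_left _ hq2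
      have h3 : q ^ (t - 1) * q = q ^ t := by
        rw [← pow_succ]; congr 1; omega
      have h4 : 1 ≤ q ^ (t - 1) := Nat.one_le_pow _ _ (by omega)
      have h5 : q ≤ q ^ (t - 1) := Nat.le_self_pow (by omega) q
      omega
    have hmod' : q ^ (i : ℕ) = q ^ (j : ℕ) := by
      have := hmod
      unfold Nat.ModEq at this
      rwa [Nat.mod_eq_of_lt (hlt i), Nat.mod_eq_of_lt (hlt j)] at this
    exact Fin.ext (Nat.pow_right_injective hq2 hmod')
  have hbij2 : Function.Bijective (fun i : Fin t => φ ^ (i : ℕ)) :=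
    (Fintype.bijective_iff_injective_and_card _).2 ⟨hinj, by rw [Fintype.card_fin, hcardaut]⟩
  have hαn : α ^ n = 1 := by
    have h1 : algebraMap F K (Algebra.norm F α) = ∏ σ : K ≃ₐ[F] K, σ α :=
      Algebra.norm_eq_prod_automorphisms (L := K) F α
    rw [hα, map_one] at h1
    have h2 : ∏ i : Fin t, (φ ^ (i : ℕ)) α = ∏ σ : K ≃ₐ[F] K, σ α :=
      Equiv.prod_comp (Equiv.ofBijective _ hbij2) (fun σ => σ α)
    have h3 : ∏ i : Fin t, (φ ^ (i : ℕ)) α = α ^ n := by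
      simp_rw [hφpow]
      rw [Finset.prod_pow_eq_pow_sum, hn, Fin.sum_univ_eq_sum_range]
    rw [← h3, h2, ← h1]
  -- the two key parametrization facts
  have hkeyν : ∀ μ : K, μ ^ n = 1 ↔ ∃ lam : K, lam ≠ 0 ∧ α * lam ^ q ^ ν = μ * lam :=
    key_iff q n (q ^ ν) hq2 hn0 hNn hgcdν α hαn (Nat.one_le_pow _ _ (by omega))
  have hkey1 : ∀ μ : K, μ ^ n = 1 ↔ ∃ lam : K, lam ≠ 0 ∧ (1 : K) * lam ^ q = μ * lam :=
    key_iff q n q hq2 hn0 hNn hgcd1 1 (one_pow n) (by omega)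
  constructor
  · have hset1 : {P : Submodule K (K × K) | ∃ lam : K, lam ≠ 0 ∧
        P = Submodule.span K {(lam, α * lam ^ q ^ ν)}} =
        (fun μ : K => Submodule.span K {((1 : K), μ)}) '' {μ : K | μ ^ n = 1} := by
      ext P
      simp only [Set.mem_setOf_eq, Set.mem_image]
      constructor
      · rintro ⟨lam, hl, rfl⟩
        refine ⟨α * lam ^ q ^ ν * lam⁻¹, ?_, ?_⟩
        · exact (hkeyν _).2 ⟨lam, hl, by field_simp⟩
        · exact (span_pair_eq lam _ _ hl (by field_simp)).symm
      · rintro ⟨μ, hμ, rfl⟩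
        obtain ⟨lam, hl, heq⟩ := (hkeyν μ).1 hμ
        exact ⟨lam, hl, (span_pair_eq lam _ μ hl (by rw [heq]; ring)).symm⟩
    rw [hset1, Set.ncard_image_of_injective _ inj_pair,
      count_pow_eq_one q n hq2 hn0 hNn, hdiv]
  · refine ⟨1, by simp, ?_⟩
    ext P
    simp only [Matrix.one_mulVec, Set.mem_setOf_eq]
    constructor
    · rintro ⟨lam, hl, rfl⟩
      have hμ : (lam ^ q * lam⁻¹) ^ n = 1 :=
        (hkey1 _).2 ⟨lam, hl, by field_simp⟩
      obtain ⟨lam', hl', heq⟩ := (hkeyν _).1 hμ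
      refine ⟨lam', hl', ?_⟩
      have e1 : Submodule.span K {![lam, lam ^ q]} =
          Submodule.span K {![(1 : K), lam ^ q * lam⁻¹]} :=
        span_vec_eq lam (lam ^ q) (lam ^ q * lam⁻¹) hl (by field_simp)
      have e2 : Submodule.span K {![lam', α * lam' ^ q ^ ν]} =
          Submodule.span K {![(1 : K), lam ^ q * lam⁻¹]} :=
        span_vec_eq lam' (α * lam' ^ q ^ ν) (lam ^ q * lam⁻¹) hl' (by rw [heq]; ring)
      rw [e1, e2]
    · rintro ⟨lam, hl, rfl⟩
      have hμ : (α * lam ^ q ^ ν * lam⁻¹) ^ n = 1 :=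
        (hkeyν _).2 ⟨lam, hl, by field_simp⟩
      obtain ⟨lam', hl', heq⟩ := (hkey1 _).1 hμ
      refine ⟨lam', hl', ?_⟩
      have e1 : Submodule.span K {![lam, α * lam ^ q ^ ν]} =
          Submodule.span K {![(1 : K), α * lam ^ q ^ ν * lam⁻¹]} :=
        span_vec_eq lam (α * lam ^ q ^ ν) (α * lam ^ q ^ ν * lam⁻¹) hl (by field_simp)
      have e2 : Submodule.span K {![lam', lam' ^ q]} =
          Submodule.span K {![(1 : K), α * lam ^ q ^ ν * lam⁻¹]} :=
        span_vec_eq lam' (lam' ^ q) (α * lam ^ q ^ ν * lam⁻¹) hl'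
          (by rw [← one_mul (lam' ^ q), heq]; ring)
      rw [e1, e2]
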